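/- Let φ be a non-degenerate Orlicz function. Then the following are equivalent: (1) for every finitely supported x ∈ span{e_n} ⊆ ℓ_φ and every n ∈ ℕ, φ(‖P_n(x)‖_φ) + φ(‖(I − P_n)(x)‖_φ) = φ(‖x‖_φ); (2) for any finite sequences (s_1,…,s_k) and (t_1,…,t_l) of nonnegative numbers with Σ_{i=1}^k φ(s_i) = 1 = Σ_{j=1}^l φ(t_j), and any λ, μ > 0, one has Σ_{i=1}^k φ( λ s_i / φ⁻¹(φ(λ)+φ(μ)) ) + Σ_{j=1}^l φ( μ t_j / φ⁻¹(φ(λ)+φ(μ)) ) = 1. -/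
import Mathlib

open Metric Set Filter
open scoped NNReal ENNReal

/-- A non-degenerate Orlicz function (viewed as a function on `[0,∞)`):
`M 0 = 0`, `M t > 0` for `t > 0`, `M` is continuous, convex and strictly
increasing on `[0,∞)`, and `M t → ∞` as `t → ∞`. -/
structure IsOrliczFunction (M : ℝ → ℝ) : Prop where
  map_zero : M 0 = 0
  pos : ∀ t : ℝ, 0 < t → 0 < M t
  continuousOn : ContinuousOn M (Ici 0)
  convexOn : ConvexOn ℝ (Ici 0) M
  strictMonoOn : StrictMonoOn M (Ici 0)
  tendsto_atTop : Tendsto M atTop atTop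

/-- The Luxemburg norm of a real sequence:
`‖x‖_M = inf {λ > 0 : ∑ₙ M(|xₙ|/λ) ≤ 1}`. -/
noncomputable def luxNorm (M : ℝ → ℝ) (x : ℕ → ℝ) : ℝ :=
  sInf {l : ℝ | 0 < l ∧ ∑' n, ENNReal.ofReal (M (|x n| / l)) ≤ 1}

/-- Membership in the Orlicz sequence space `ℓ_M`:
`∑ₙ M(|xₙ|/λ) < ∞` for some `λ > 0`. -/
def MemOrlicz (M : ℝ → ℝ) (x : ℕ → ℝ) : Prop :=
  ∃ l : ℝ, 0 < l ∧ (∑' n, ENNReal.ofReal (M (|x n| / l))) < ⊤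

/-- The canonical projection of a sequence onto its first `n` coordinates. -/
def projSeq (n : ℕ) (x : ℕ → ℝ) : ℕ → ℝ := fun i => if i < n then x i else 0

/-- The inverse of a non-degenerate Orlicz function, regarded as a bijection
of `[0,∞)` onto itself. -/
noncomputable def orliczInv (M : ℝ → ℝ) (y : ℝ) : ℝ :=
  sInf {t : ℝ | 0 ≤ t ∧ y ≤ M t}

open scoped Topology

section Aux

variable {φ : ℝ → ℝ}

private lemma phi_nonneg (hφ : IsOrliczFunction φ) {t : ℝ} (ht : 0 ≤ t) : 0 ≤ φ t := by
  rcases eq_or_lt_of_le ht with h | h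
  · simp [← h, hφ.map_zero]
  · exact (hφ.pos t h).le

private lemma orliczInv_phi (hφ : IsOrliczFunction φ) {t : ℝ} (ht : 0 ≤ t) :
    orliczInv φ (φ t) = t := by
  unfold orliczInv
  apply le_antisymm
  · exact csInf_le ⟨0, fun s hs => hs.1⟩ ⟨ht, le_rfl⟩
  · refine le_csInf ⟨t, ht, le_rfl⟩ ?_
    rintro s ⟨hs0, hs⟩
    by_contra h
    push_neg at h
    exact absurd hs (not_le.2 (hφ.strictMonoOn hs0 ht h))

private lemma exists_phi_eq (hφ : IsOrliczFunction φ) {y : ℝ} (hy : 0 ≤ y) :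
    ∃ t, 0 ≤ t ∧ φ t = y := by
  obtain ⟨T, hT1, hT0⟩ := ((hφ.tendsto_atTop.eventually_ge_atTop y).and
    (eventually_ge_atTop (0:ℝ))).exists
  have h := intermediate_value_Icc hT0 (hφ.continuousOn.mono (Icc_subset_Ici_self))
  have hy' : y ∈ Icc (φ 0) (φ T) := ⟨by rw [hφ.map_zero]; exact hy, hT1⟩
  obtain ⟨t, ht, htv⟩ := h hy'
  exact ⟨t, ht.1, htv⟩

private lemma luxNorm_of_zero (hφ : IsOrliczFunction φ) {x : ℕ → ℝ} (hx : ∀ n, x n = 0) :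
    luxNorm φ x = 0 := by
  have : {l : ℝ | 0 < l ∧ ∑' n, ENNReal.ofReal (φ (|x n| / l)) ≤ 1} = Ioi 0 := by
    ext l
    simp [hx, hφ.map_zero, Set.mem_Ioi]
  rw [luxNorm, this, csInf_Ioi]

private lemma orliczTsum_finsum (hφ : IsOrliczFunction φ) {x : ℕ → ℝ} {A : Finset ℕ}
    (hA : ∀ i ∉ A, x i = 0) {l : ℝ} (hl : 0 < l) :
    ∑' n, ENNReal.ofReal (φ (|x n| / l)) = ENNReal.ofReal (∑ i ∈ A, φ (|x i| / l)) := by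
  rw [tsum_eq_sum (s := A) (fun b hb => by simp [hA b hb, hφ.map_zero]),
    ENNReal.ofReal_sum_of_nonneg]
  intro i _
  exact phi_nonneg hφ (div_nonneg (abs_nonneg _) hl.le)

private lemma luxNorm_eq (hφ : IsOrliczFunction φ) {x : ℕ → ℝ} {A : Finset ℕ}
    (hA : ∀ i ∉ A, x i = 0) {c : ℝ} (hc : 0 < c)
    (h1 : ∑ i ∈ A, φ (|x i| / c) = 1) : luxNorm φ x = c := by
  obtain ⟨i0, hi0A, hi0⟩ : ∃ i0 ∈ A, x i0 ≠ 0 := by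
    by_contra h
    push_neg at h
    rw [Finset.sum_eq_zero (fun i hi => by simp [h i hi, hφ.map_zero])] at h1
    simp at h1
  have hmemc : c ∈ {l : ℝ | 0 < l ∧ ∑' n, ENNReal.ofReal (φ (|x n| / l)) ≤ 1} := by
    refine ⟨hc, ?_⟩
    rw [orliczTsum_finsum hφ hA hc, h1]
    simp
  have hlb : ∀ l ∈ {l : ℝ | 0 < l ∧ ∑' n, ENNReal.ofReal (φ (|x n| / l)) ≤ 1}, c ≤ l := by
    rintro l ⟨hl, hle⟩
    by_contra h
    push_neg at h
    rw [orliczTsum_finsum hφ hA hl, ENNReal.ofReal_le_one] at hle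
    have hlt : (1:ℝ) < ∑ i ∈ A, φ (|x i| / l) := by
      rw [← h1]
      refine Finset.sum_lt_sum (fun i _ => ?_) ⟨i0, hi0A, ?_⟩
      · refine hφ.strictMonoOn.monotoneOn (mem_Ici.2 (div_nonneg (abs_nonneg _) hc.le))
          (mem_Ici.2 (div_nonneg (abs_nonneg _) hl.le)) ?_
        gcongr
      · refine hφ.strictMonoOn (mem_Ici.2 (div_nonneg (abs_nonneg _) hc.le))
          (mem_Ici.2 (div_nonneg (abs_nonneg _) hl.le)) ?_
        exact div_lt_div_of_pos_left (abs_pos.2 hi0) hl h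
    linarith
  exact le_antisymm (csInf_le ⟨0, fun s hs => hs.1.le⟩ hmemc) (le_csInf ⟨c, hmemc⟩ hlb)

private lemma exists_norming (hφ : IsOrliczFunction φ) {x : ℕ → ℝ} (A : Finset ℕ)
    {i0 : ℕ} (hi0A : i0 ∈ A) (hi0 : x i0 ≠ 0) :
    ∃ c, 0 < c ∧ ∑ i ∈ A, φ (|x i| / c) = 1 := by
  set g : ℝ → ℝ := fun c => ∑ i ∈ A, φ (|x i| / c) with hg
  have hcont0 : Tendsto φ (𝓝[Ici 0] 0) (𝓝 0) := by
    have := hφ.continuousOn 0 (mem_Ici.2 le_rfl)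
    rwa [ContinuousWithinAt, hφ.map_zero] at this
  have hterm : ∀ i : ℕ, Tendsto (fun c : ℝ => φ (|x i| / c)) atTop (𝓝 0) := by
    intro i
    have h1 : Tendsto (fun c : ℝ => |x i| / c) atTop (𝓝 0) :=
      tendsto_const_nhds.div_atTop tendsto_id
    have h2 : Tendsto (fun c : ℝ => |x i| / c) atTop (𝓝[Ici 0] 0) := by
      rw [tendsto_nhdsWithin_iff]
      refine ⟨h1, ?_⟩
      filter_upwards [eventually_gt_atTop (0:ℝ)] with c hc
      exact mem_Ici.2 (div_nonneg (abs_nonneg _) hc.le)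
    exact hcont0.comp h2
  have hgtend : Tendsto g atTop (𝓝 0) := by
    have := tendsto_finset_sum A (fun i (_ : i ∈ A) => hterm i)
    simpa using this
  obtain ⟨b, hb1, hb0⟩ := ((hgtend.eventually_lt_const one_pos).and
    (eventually_gt_atTop (0:ℝ))).exists
  have hbig : Tendsto (fun c : ℝ => φ (|x i0| / c)) (𝓝[>] (0:ℝ)) atTop := by
    have h1 : Tendsto (fun c : ℝ => |x i0| / c) (𝓝[>] (0:ℝ)) atTop := by
      simp only [div_eq_mul_inv]
      exact tendsto_inv_nhdsGT_zero.const_mul_atTop (abs_pos.2 hi0)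
    exact hφ.tendsto_atTop.comp h1
  have hmem : Ioo (0:ℝ) b ∈ 𝓝[>] (0:ℝ) := Ioo_mem_nhdsGT_of_mem ⟨le_rfl, hb0⟩
  obtain ⟨a, ha1, ha2⟩ := ((hbig.eventually_ge_atTop 2).and hmem).exists
  have ha0 : 0 < a := ha2.1
  have hab : a ≤ b := ha2.2.le
  have hga : 1 < g a := by
    have hle : φ (|x i0| / a) ≤ g a :=
      Finset.single_le_sum (f := fun i => φ (|x i| / a))
        (fun i _ => phi_nonneg hφ (div_nonneg (abs_nonneg _) ha0.le)) hi0A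
    linarith
  have hgc : ContinuousOn g (Icc a b) := by
    refine continuousOn_finset_sum A (fun i _ => ?_)
    refine hφ.continuousOn.comp (continuousOn_const.div continuousOn_id ?_) ?_
    · intro c hc
      exact ne_of_gt (lt_of_lt_of_le ha0 hc.1)
    · intro c hc
      exact mem_Ici.2 (div_nonneg (abs_nonneg _) (le_trans ha0.le hc.1))
  obtain ⟨c, hcmem, hcv⟩ := intermediate_value_Icc' hab hgc ⟨hb1.le, hga.le⟩
  exact ⟨c, lt_of_lt_of_le ha0 hcmem.1, hcv⟩

end Aux

/-- for a non-degenerate Orlicz function `φ`, the norm identity (1)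
for finitely supported sequences is equivalent to the combinatorial condition (2). -/
theorem orlicz_luxNorm_eq_iff_star (φ : ℝ → ℝ) (hφ : IsOrliczFunction φ) :
    -- (1)
    (∀ x : ℕ → ℝ, (Function.support x).Finite → ∀ n : ℕ,
      φ (luxNorm φ (projSeq n x)) + φ (luxNorm φ (x - projSeq n x)) =
        φ (luxNorm φ x)) ↔
    -- (2)
    (∀ (k l : ℕ) (s : Fin k → ℝ) (t : Fin l → ℝ),
      (∀ i, 0 ≤ s i) → (∀ j, 0 ≤ t j) →
      (∑ i, φ (s i)) = 1 → (∑ j, φ (t j)) = 1 →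
      ∀ lam mu : ℝ, 0 < lam → 0 < mu →
        (∑ i, φ (lam * s i / orliczInv φ (φ lam + φ mu))) +
          (∑ j, φ (mu * t j / orliczInv φ (φ lam + φ mu))) = 1) := by
  constructor
  · -- (1) → (2)
    intro H k l s t hs ht hs1 ht1 lam mu hlam hmu
    set x : ℕ → ℝ := fun i => if h : i < k then lam * s ⟨i, h⟩ else
      if h' : i < k + l then mu * t ⟨i - k, by omega⟩ else 0 with hxdef
    have hxA : ∀ i ∉ Finset.range (k + l), x i = 0 := by
      intro i hi
      simp only [Finset.mem_range, not_lt] at hi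
      simp only [hxdef]
      rw [dif_neg (by omega), dif_neg (by omega)]
    have hxlt : ∀ i : Fin k, x (i : ℕ) = lam * s i := by
      intro i
      simp only [hxdef]
      rw [dif_pos i.isLt]
    have hxge : ∀ j : Fin l, x (k + (j : ℕ)) = mu * t j := by
      intro j
      simp only [hxdef]
      rw [dif_neg (by omega), dif_pos (by omega)]
      simp [Nat.add_sub_cancel_left]
    -- norm of the projected part is lam
    have huA : ∀ i ∉ Finset.range k, projSeq k x i = 0 := by
      intro i hi
      simp only [Finset.mem_range, not_lt] at hi
      simp [projSeq, Nat.not_lt.2 hi]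
    have husum : ∑ i ∈ Finset.range k, φ (|projSeq k x i| / lam) = 1 := by
      rw [← Fin.sum_univ_eq_sum_range (fun i => φ (|projSeq k x i| / lam)) k, ← hs1]
      refine Finset.sum_congr rfl fun i _ => ?_
      have : projSeq k x (i : ℕ) = lam * s i := by
        simp only [projSeq, if_pos i.isLt]
        exact hxlt i
      rw [this, abs_of_nonneg (mul_nonneg hlam.le (hs i)), mul_div_cancel_left₀ _ hlam.ne']
    have hnu : luxNorm φ (projSeq k x) = lam := luxNorm_eq hφ huA hlam husum
    -- norm of the tail is mu
    have hvA : ∀ i ∉ Finset.range (k + l), (x - projSeq k x) i = 0 := by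
      intro i hi
      simp only [Finset.mem_range, not_lt] at hi
      have h1 : x i = 0 := hxA i (by simp only [Finset.mem_range, not_lt]; exact hi)
      have h2 : projSeq k x i = 0 := by simp [projSeq]; omega
      simp [h1, h2]
    have hvsum : ∑ i ∈ Finset.range (k + l), φ (|(x - projSeq k x) i| / mu) = 1 := by
      rw [Finset.sum_range_add]
      have e1 : ∑ i ∈ Finset.range k, φ (|(x - projSeq k x) i| / mu) = 0 := by
        refine Finset.sum_eq_zero fun i hi => ?_
        have : projSeq k x i = x i := by
          simp [projSeq, Finset.mem_range.1 hi]
        simp [this, hφ.map_zero]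
      have e2 : ∑ i ∈ Finset.range l, φ (|(x - projSeq k x) (k + i)| / mu) = 1 := by
        rw [← Fin.sum_univ_eq_sum_range (fun i => φ (|(x - projSeq k x) (k + i)| / mu)) l,
          ← ht1]
        refine Finset.sum_congr rfl fun j _ => ?_
        have h2 : projSeq k x (k + (j : ℕ)) = 0 := by simp [projSeq]
        have : (x - projSeq k x) (k + (j : ℕ)) = mu * t j := by
          simp only [Pi.sub_apply, h2, sub_zero]
          exact hxge j
        rw [this, abs_of_nonneg (mul_nonneg hmu.le (ht j)), mul_div_cancel_left₀ _ hmu.ne']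
      rw [e1, e2, zero_add]
    have hnv : luxNorm φ (x - projSeq k x) = mu := luxNorm_eq hφ hvA hmu hvsum
    -- apply (1)
    have hfin : (Function.support x).Finite := by
      refine Set.Finite.subset (Finset.range (k + l)).finite_toSet fun i hi => ?_
      by_contra h
      exact hi (hxA i (by simpa using h))
    have hmain := H x hfin k
    rw [hnu, hnv] at hmain
    -- the norming constant for x
    obtain ⟨j0, hj0⟩ : ∃ j0 : Fin l, t j0 ≠ 0 := by
      by_contra h
      push_neg at h
      rw [Finset.sum_eq_zero (fun j _ => by simp [h j, hφ.map_zero])] at ht1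
      simp at ht1
    have hi0mem : k + (j0 : ℕ) ∈ Finset.range (k + l) := by
      simp only [Finset.mem_range]
      omega
    have hi0ne : x (k + (j0 : ℕ)) ≠ 0 := by
      rw [hxge j0]
      exact mul_ne_zero hmu.ne' hj0
    obtain ⟨c, hc, hcsum⟩ := exists_norming hφ (Finset.range (k + l)) hi0mem hi0ne
    have hcx : luxNorm φ x = c := luxNorm_eq hφ hxA hc hcsum
    rw [hcx] at hmain
    rw [hmain, orliczInv_phi hφ hc.le]
    -- identify the two sums
    have e1 : ∑ i : Fin k, φ (lam * s i / c) =
        ∑ i ∈ Finset.range k, φ (|x i| / c) := by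
      rw [← Fin.sum_univ_eq_sum_range (fun i => φ (|x i| / c)) k]
      refine Finset.sum_congr rfl fun i _ => ?_
      rw [hxlt i, abs_of_nonneg (mul_nonneg hlam.le (hs i))]
    have e2 : ∑ j : Fin l, φ (mu * t j / c) =
        ∑ j ∈ Finset.range l, φ (|x (k + j)| / c) := by
      rw [← Fin.sum_univ_eq_sum_range (fun j => φ (|x (k + j)| / c)) l]
      refine Finset.sum_congr rfl fun j _ => ?_
      rw [hxge j, abs_of_nonneg (mul_nonneg hmu.le (ht j))]
    rw [e1, e2, ← Finset.sum_range_add (fun i => φ (|x i| / c)) k l, hcsum]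
  · -- (2) → (1)
    intro H x hfin n
    by_cases hu0 : ∀ i, projSeq n x i = 0
    · have hxu : x - projSeq n x = x := by
        funext i
        simp [hu0 i]
      rw [hxu, luxNorm_of_zero hφ hu0, hφ.map_zero, zero_add]
    by_cases hv0 : ∀ i, (x - projSeq n x) i = 0
    · have hxu : projSeq n x = x := by
        funext i
        have := hv0 i
        simp only [Pi.sub_apply] at this
        linarith
      rw [luxNorm_of_zero hφ hv0, hφ.map_zero, add_zero, hxu]
    push_neg at hu0 hv0
    obtain ⟨iu, hiu⟩ := hu0
    obtain ⟨iv, hiv⟩ := hv0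
    have hiun : iu < n := by
      by_contra h
      exact hiu (by simp [projSeq, h])
    obtain ⟨m0, hm0⟩ := Finset.exists_nat_subset_range hfin.toFinset
    set m : ℕ := max m0 n with hm
    have hnm : n ≤ m := le_max_right _ _
    have hxm : ∀ i, m ≤ i → x i = 0 := by
      intro i hi
      by_contra h
      have h1 : i ∈ hfin.toFinset := by
        rw [Set.Finite.mem_toFinset]
        exact h
      have := Finset.mem_range.1 (hm0 h1)
      omega
    have huA : ∀ i ∉ Finset.range n, projSeq n x i = 0 := by
      intro i hi
      simp only [Finset.mem_range, not_lt] at hi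
      simp [projSeq]
      omega
    have hvA : ∀ i ∉ Finset.range m, (x - projSeq n x) i = 0 := by
      intro i hi
      simp only [Finset.mem_range, not_lt] at hi
      have h1 : x i = 0 := hxm i hi
      have h2 : projSeq n x i = 0 := by simp [projSeq]; omega
      simp [h1, h2]
    have hivm : iv < m := by
      by_contra h
      exact hiv (hvA iv (by simp only [Finset.mem_range, not_lt]; omega))
    obtain ⟨lam, hlam, hlamsum⟩ :=
      exists_norming hφ (Finset.range n) (Finset.mem_range.2 hiun) hiu
    obtain ⟨mu, hmu, hmusum⟩ :=
      exists_norming hφ (Finset.range m) (Finset.mem_range.2 hivm) hiv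
    have hnu : luxNorm φ (projSeq n x) = lam := luxNorm_eq hφ huA hlam hlamsum
    have hnv : luxNorm φ (x - projSeq n x) = mu := luxNorm_eq hφ hvA hmu hmusum
    rw [hnu, hnv]
    -- apply (2)
    have hsum1 : ∑ i : Fin n, φ (|projSeq n x (i : ℕ)| / lam) = 1 := by
      rw [Fin.sum_univ_eq_sum_range (fun i => φ (|projSeq n x i| / lam)) n]
      exact hlamsum
    have hsum2 : ∑ j : Fin m, φ (|(x - projSeq n x) (j : ℕ)| / mu) = 1 := by
      rw [Fin.sum_univ_eq_sum_range (fun j => φ (|(x - projSeq n x) j| / mu)) m]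
      exact hmusum
    have key := H n m (fun i => |projSeq n x (i : ℕ)| / lam)
      (fun j => |(x - projSeq n x) (j : ℕ)| / mu)
      (fun i => div_nonneg (abs_nonneg _) hlam.le)
      (fun j => div_nonneg (abs_nonneg _) hmu.le)
      hsum1 hsum2 lam mu hlam hmu
    have hcancel1 : ∀ a : ℝ, lam * (a / lam) = a := fun a => by
      field_simp
    have hcancel2 : ∀ a : ℝ, mu * (a / mu) = a := fun a => by
      field_simp
    simp only [hcancel1, hcancel2] at key
    -- identify orliczInv (φ lam + φ mu)
    have hy0 : 0 ≤ φ lam + φ mu :=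
      add_nonneg (phi_nonneg hφ hlam.le) (phi_nonneg hφ hmu.le)
    obtain ⟨d, hd0, hdy⟩ := exists_phi_eq hφ hy0
    have hD : orliczInv φ (φ lam + φ mu) = d := by
      rw [← hdy, orliczInv_phi hφ hd0]
    have hdpos : 0 < d := by
      rcases hd0.lt_or_eq with h | h
      · exact h
      · exfalso
        rw [← h, hφ.map_zero] at hdy
        have := hφ.pos lam hlam
        have := phi_nonneg hφ hmu.le
        linarith
    rw [hD] at key
    -- convert key to a single sum over range m
    have e1 : ∑ i : Fin n, φ (|projSeq n x (i : ℕ)| / d) =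
        ∑ i ∈ Finset.range n, φ (|x i| / d) := by
      rw [Fin.sum_univ_eq_sum_range (fun i => φ (|projSeq n x i| / d)) n]
      refine Finset.sum_congr rfl fun i hi => ?_
      simp [projSeq, Finset.mem_range.1 hi]
    have e2 : ∑ j : Fin m, φ (|(x - projSeq n x) (j : ℕ)| / d) =
        ∑ j ∈ Finset.Ico n m, φ (|x j| / d) := by
      rw [Fin.sum_univ_eq_sum_range (fun j => φ (|(x - projSeq n x) j| / d)) m]
      rw [Finset.range_eq_Ico, ← Finset.sum_Ico_consecutive _ (Nat.zero_le n) hnm]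
      have ez : ∑ j ∈ Finset.Ico 0 n, φ (|(x - projSeq n x) j| / d) = 0 := by
        refine Finset.sum_eq_zero fun j hj => ?_
        have hjn : j < n := (Finset.mem_Ico.1 hj).2
        simp [projSeq, hjn, hφ.map_zero]
      rw [ez, zero_add]
      refine Finset.sum_congr rfl fun j hj => ?_
      have hjn : n ≤ j := (Finset.mem_Ico.1 hj).1
      have h2 : projSeq n x j = 0 := by simp [projSeq]; omega
      simp [h2]
    rw [e1, e2] at key
    have hsumx : ∑ i ∈ Finset.range m, φ (|x i| / d) = 1 := by
      rw [Finset.range_eq_Ico, ← Finset.sum_Ico_consecutive _ (Nat.zero_le n) hnm,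
        ← Finset.range_eq_Ico]
      exact key
    have hxA' : ∀ i ∉ Finset.range m, x i = 0 := by
      intro i hi
      refine hxm i ?_
      simp only [Finset.mem_range, not_lt] at hi
      exact hi
    have hnx : luxNorm φ x = d := luxNorm_eq hφ hxA' hdpos hsumx
    rw [hnx, hdy]
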